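/- In the big-M formulation of the ramp-loss problem, the valid inequality ξ_i ≤ 2(1 − z_i) for all i does not cut off any optimal solution: for every optimal solution (w*, b*, ξ*, z*) of the conditional ramp-loss problem (RL-ℓp), one has ξ_i* ≤ 2(1 − z_i*) for all i. -/
import Mathlib


open Finset

/-- The valid inequality ξ_i ≤ 2(1 − z_i) does not cut off any optimal
solution of the conditional ramp-loss problem (RL-ℓp). -/
theorem rampLoss_optimal_validInequality
    (n d : ℕ) (x : Fin n → Fin d → ℝ) (y : Fin n → ℝ)
    (hy : ∀ i, y i = 1 ∨ y i = -1)
    (C p : ℝ) (hC : 0 < C) (hp : 1 ≤ p)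
    (Feasible : (Fin d → ℝ) → ℝ → (Fin n → ℝ) → (Fin n → ℝ) → Prop)
    (hFeas : ∀ w b ξ z, Feasible w b ξ z ↔
      (∀ i, 0 ≤ ξ i ∧ ξ i ≤ 2) ∧ (∀ i, z i = 0 ∨ z i = 1) ∧
      (∀ i, z i = 0 → y i * ((∑ k, w k * x i k) + b) ≥ 1 - ξ i))
    (obj : (Fin d → ℝ) → ℝ → (Fin n → ℝ) → (Fin n → ℝ) → ℝ)
    (hobj : ∀ w b ξ z, obj w b ξ z =
      (1 / p) * (∑ k, |w k| ^ p) + C * ((∑ i, ξ i) + 2 * ∑ i, z i))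
    (w' : Fin d → ℝ) (b' : ℝ) (ξ' z' : Fin n → ℝ)
    (hfeas : Feasible w' b' ξ' z')
    (hopt : ∀ w b ξ z, Feasible w b ξ z → obj w' b' ξ' z' ≤ obj w b ξ z) :
    ∀ i, ξ' i ≤ 2 * (1 - z' i) := by
  intro i
  rw [hFeas] at hfeas
  obtain ⟨hbd, hz, hcon⟩ := hfeas
  rcases hz i with hzi | hzi
  · -- z i = 0: ξ i ≤ 2 suffices
    rw [hzi]
    linarith [(hbd i).2]
  · -- z i = 1: show ξ i ≤ 0 via optimality with ξ updated to 0 at i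
    rw [hzi]
    set ξ'' := Function.update ξ' i 0 with hξ''
    have hfeas'' : Feasible w' b' ξ'' z' := by
      rw [hFeas]
      refine ⟨?_, hz, ?_⟩
      · intro j
        by_cases hj : j = i
        · subst hj; simp [hξ'']
        · simp [hξ'', Function.update_of_ne hj]; exact hbd j
      · intro j hj
        have hji : j ≠ i := by rintro rfl; rw [hj] at hzi; norm_num at hzi
        rw [hξ'', Function.update_of_ne hji]
        exact hcon j hj
    have hle := hopt w' b' ξ'' z' hfeas''
    rw [hobj, hobj] at hle
    have hsum : (∑ j, ξ'' j) = (∑ j, ξ' j) - ξ' i := by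
      rw [hξ'', Finset.sum_update_of_mem (Finset.mem_univ i)]
      rw [← Finset.add_sum_erase Finset.univ ξ' (Finset.mem_univ i), Finset.sdiff_singleton_eq_erase]
      ring
    rw [hsum] at hle
    have : C * ξ' i ≤ 0 := by linarith
    have hxi : ξ' i ≤ 0 := by
      nlinarith
    linarith
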